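/- With the matrix A as above, if λ > 0 satisfies Σ_{j=1}^{k*} (1−q)·j·ν(j)/(λ − q·j) = 1 and λ/q ∉ C, then the vector u with u(i) = q·i/(λ − q·i) for i ∈ C and u(⋆) = 1 is a right-eigenvector of A with eigenvalue λ, i.e. Σ_j A_{i,j}·u(j) = λ·u(i) for all i ∈ C ∪ {⋆}. -/

import Mathlib

open Finset Matrix

/-- If `λ > 0` solves `Σ_j (1-q) j ν(j)/(λ - q j) = 1` with `λ/q ∉ C`, then
`u(i) = q i/(λ - q i)`, `u(⋆) = 1` is a right-eigenvector of the replacement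
matrix `A` with eigenvalue `λ`. -/
theorem stmt_5 (kstar : ℕ) (hkstar : 2 ≤ kstar)
    (ν : ℕ → ℝ) (hν0 : ∀ j, 0 ≤ ν j) (hνsum : ∑ j ∈ Finset.Icc 1 kstar, ν j ≤ 1)
    (hνk : 0 < ν kstar)
    (q : ℝ) (hq : q ∈ Set.Ioo (0 : ℝ) 1)
    (C : Finset ℕ) (hC : ∀ j, j ∈ C ↔ j ∈ Finset.Icc 1 kstar ∧ 0 < ν j)
    (lam : ℝ) (hlam : 0 < lam) (hlamC : ∀ j ∈ C, lam ≠ q * j)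
    (heq : ∑ j ∈ Finset.Icc 1 kstar, (1 - q) * j * ν j / (lam - q * j) = 1)
    (A : Matrix ((↥C) ⊕ Unit) ((↥C) ⊕ Unit) ℝ)
    (hAcc : ∀ i j : ↥C, A (Sum.inl i) (Sum.inl j) = if (i : ℕ) = (j : ℕ) then q * (i : ℕ) else 0)
    (hAcs : ∀ i : ↥C, A (Sum.inl i) (Sum.inr ()) = q * (i : ℕ))
    (hAsc : ∀ j : ↥C, A (Sum.inr ()) (Sum.inl j) = (1 - q) * (j : ℕ) * ν j)
    (hAss : A (Sum.inr ()) (Sum.inr ()) = (1 - q) * ∑ j ∈ Finset.Icc 1 kstar, (j : ℝ) * ν j)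
    (u : ((↥C) ⊕ Unit) → ℝ)
    (huC : ∀ i : ↥C, u (Sum.inl i) = q * (i : ℕ) / (lam - q * (i : ℕ)))
    (hus : u (Sum.inr ()) = 1) :
    Matrix.mulVec A u = lam • u := by
  funext x
  cases x with
  | inl i =>
    have hne : lam - q * (i : ℕ) ≠ 0 := sub_ne_zero.mpr (hlamC i i.2)
    simp only [Matrix.mulVec, dotProduct, Fintype.sum_sum_type, Finset.univ_unique,
      Finset.sum_singleton, Pi.smul_apply, smul_eq_mul]
    rw [Finset.sum_eq_single i]
    · rw [hAcc, hAcs, huC, hus]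
      rw [if_pos (rfl : (i : ℕ) = (i : ℕ))]
      field_simp
      ring
    · intro j _ hji
      rw [hAcc, if_neg (fun h => hji (Subtype.ext h.symm)), zero_mul]
    · intro h; exact absurd (Finset.mem_univ i) h
  | inr u' =>
    have hCsub : C ⊆ Finset.Icc 1 kstar := fun j hj => ((hC j).mp hj).1
    simp only [Matrix.mulVec, dotProduct, Fintype.sum_sum_type, Finset.univ_unique,
      Finset.sum_singleton, Pi.smul_apply, smul_eq_mul]
    simp only [hAsc, hAss, huC, hus, mul_one]
    have hsum : ∑ j : ↥C, (1 - q) * (j : ℕ) * ν j * (q * (j : ℕ) / (lam - q * (j : ℕ)))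
        = ∑ j ∈ Finset.Icc 1 kstar,
          (1 - q) * (j : ℕ) * ν j * (q * (j : ℕ) / (lam - q * (j : ℕ))) := by
      rw [Finset.sum_coe_sort C
        (fun j => (1 - q) * (j : ℕ) * ν j * (q * (j : ℕ) / (lam - q * (j : ℕ))))]
      refine Finset.sum_subset hCsub ?_
      intro j hj hjC
      have : ν j = 0 := by
        by_contra h
        exact hjC ((hC j).mpr ⟨hj, lt_of_le_of_ne (hν0 j) (Ne.symm h)⟩)
      simp [this]
    rw [hsum]
    have key : ∀ j ∈ Finset.Icc 1 kstar,
        (1 - q) * (j : ℕ) * ν j * (q * (j : ℕ) / (lam - q * (j : ℕ))) + (1 - q) * ((j : ℕ) * ν j)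
        = lam * ((1 - q) * (j : ℕ) * ν j / (lam - q * (j : ℕ))) := by
      intro j hj
      by_cases hνj : ν j = 0
      · simp [hνj]
      · have hjC : j ∈ C := (hC j).mpr ⟨hj, lt_of_le_of_ne (hν0 j) (Ne.symm hνj)⟩
        have hne : lam - q * (j : ℕ) ≠ 0 := sub_ne_zero.mpr (hlamC j hjC)
        field_simp
        ring
    rw [Finset.mul_sum, ← Finset.sum_add_distrib, Finset.sum_congr rfl key,
      ← Finset.mul_sum, heq, mul_one]
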